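/- arXiv:2003.03889 — 11 statements merged into one kernel-verified Lean document; each statement's English description precedes it below -/
import Mathlib

section
/- Let D, M ∈ ℝ^{s×s} and t_L ∈ ℝ^s, where M is symmetric positive definite, M·D + (M·D)ᵀ = t_R·t_Rᵀ − t_L·t_Lᵀ for some t_R ∈ ℝ^s, D·𝟙 = 0 and t_Lᵀ·𝟙 = 1. Then the matrix D + M⁻¹·t_L·t_Lᵀ is invertible if and only if the kernel of D (as a linear map ℝ^s → ℝ^s) is exactly the span of 𝟙. -/
open Matrix

lemma vmv_mulVec {s : ℕ} (a b x : Fin s → ℝ) :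
    vecMulVec a b *ᵥ x = (b ⬝ᵥ x) • a := by
  ext i
  simp [vecMulVec_apply, mulVec, dotProduct, Finset.sum_mul, Finset.mul_sum,
    mul_comm, mul_assoc, mul_left_comm]

/-- For a first-derivative SBP operator (M symmetric positive definite,
SBP property, consistency `D *ᵥ 1 = 0`, `t_L ⬝ᵥ 1 = 1`), the matrix
`D + M⁻¹ * t_L t_Lᵀ` is invertible iff `D` is nullspace consistent, i.e.
`ker D = span {𝟙}`. -/
theorem sbp_sat_invertible_iff_nullspace_consistent
    {s : ℕ} (hs : 1 ≤ s)
    (D M : Matrix (Fin s) (Fin s) ℝ) (tL tR : Fin s → ℝ)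
    (hM : M.PosDef)
    (hSBP : M * D + (M * D)ᵀ = vecMulVec tR tR - vecMulVec tL tL)
    (hD1 : D *ᵥ (1 : Fin s → ℝ) = 0)
    (htL1 : tL ⬝ᵥ (1 : Fin s → ℝ) = 1) :
    IsUnit (D + M⁻¹ * vecMulVec tL tL) ↔
      LinearMap.ker (Matrix.toLin' D) = Submodule.span ℝ {(1 : Fin s → ℝ)} := by
  set A := D + M⁻¹ * vecMulVec tL tL with hA
  have hMdet : IsUnit M.det := (Ne.isUnit hM.det_pos.ne')
  have hMMinv : M * M⁻¹ = 1 := Matrix.mul_nonsing_inv M hMdet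
  -- key: A x = 0 → D x = 0 ∧ tL ⬝ᵥ x = 0
  have key : ∀ x : Fin s → ℝ, A *ᵥ x = 0 → D *ᵥ x = 0 ∧ tL ⬝ᵥ x = 0 := by
    intro x hx
    set c := tL ⬝ᵥ x with hc
    have hAx : D *ᵥ x + c • (M⁻¹ *ᵥ tL) = 0 := by
      have := hx
      rw [hA, Matrix.add_mulVec, ← Matrix.mulVec_mulVec,
        vmv_mulVec, Matrix.mulVec_smul] at this
      exact this
    have hMDx : M *ᵥ (D *ᵥ x) = -(c • tL) := by
      have h2 := congrArg (fun v => M *ᵥ v) hAx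
      simp only [Matrix.mulVec_add, Matrix.mulVec_smul, Matrix.mulVec_mulVec,
        Matrix.mulVec_zero] at h2
      rw [← Matrix.mulVec_mulVec, hMMinv] at h2
      have : M *ᵥ (D *ᵥ x) + c • ((1 : Matrix (Fin s) (Fin s) ℝ) *ᵥ tL) = 0 := h2
      rw [Matrix.one_mulVec] at this
      linear_combination (norm := module) this
    -- quadratic form computation
    have hquad : x ⬝ᵥ ((M * D + (M * D)ᵀ) *ᵥ x) = -(2 * c ^ 2) := by
      have h1 : x ⬝ᵥ ((M * D) *ᵥ x) = -(c ^ 2) := by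
        rw [← Matrix.mulVec_mulVec, hMDx]
        simp only [dotProduct_neg, dotProduct_smul, smul_eq_mul, hc]
        rw [dotProduct_comm x tL]; ring
      have h2 : x ⬝ᵥ ((M * D)ᵀ *ᵥ x) = x ⬝ᵥ ((M * D) *ᵥ x) := by
        rw [Matrix.mulVec_transpose, dotProduct_comm, ← Matrix.dotProduct_mulVec]
      rw [Matrix.add_mulVec, dotProduct_add, h1, h2, h1]; ring
    have hquad2 : x ⬝ᵥ ((M * D + (M * D)ᵀ) *ᵥ x) = (tR ⬝ᵥ x) ^ 2 - c ^ 2 := by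
      rw [hSBP, Matrix.sub_mulVec, dotProduct_sub, vmv_mulVec, vmv_mulVec,
        dotProduct_smul, dotProduct_smul]
      simp only [smul_eq_mul, hc]
      rw [dotProduct_comm x tR, dotProduct_comm x tL]; ring
    have hc0 : c = 0 := by
      have : (tR ⬝ᵥ x) ^ 2 + c ^ 2 = 0 := by
        have := hquad.symm.trans hquad2; linarith
      nlinarith [sq_nonneg (tR ⬝ᵥ x), sq_nonneg c]
    refine ⟨?_, hc0⟩
    have : M *ᵥ (D *ᵥ x) = 0 := by rw [hMDx, hc0]; simp
    have h3 := congrArg (fun v => M⁻¹ *ᵥ v) this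
    simp only [Matrix.mulVec_mulVec, Matrix.mulVec_zero] at h3
    rwa [← mul_assoc, Matrix.nonsing_inv_mul M hMdet, one_mul] at h3
  -- A *ᵥ 1 = M⁻¹ *ᵥ tL
  have hA1 : A *ᵥ (1 : Fin s → ℝ) = M⁻¹ *ᵥ tL := by
    rw [hA, Matrix.add_mulVec, hD1, ← Matrix.mulVec_mulVec, vmv_mulVec, htL1]
    simp [Matrix.mulVec_smul]
  constructor
  · intro hU
    have hAdet : IsUnit A.det := (Matrix.isUnit_iff_isUnit_det A).1 hU
    have hAinv : A⁻¹ * A = 1 := Matrix.nonsing_inv_mul A hAdet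
    apply le_antisymm
    · intro x hx
      have hDx : D *ᵥ x = 0 := by simpa [Matrix.toLin'_apply] using hx
      set c := tL ⬝ᵥ x with hc
      have : A *ᵥ (x - c • 1) = 0 := by
        rw [Matrix.mulVec_sub, Matrix.mulVec_smul, hA1, hA, Matrix.add_mulVec, hDx,
          ← Matrix.mulVec_mulVec, vmv_mulVec, ← hc, Matrix.mulVec_smul]
        simp
      have hz : x - c • 1 = 0 := by
        have := congrArg (fun v => A⁻¹ *ᵥ v) this
        simpa [Matrix.mulVec_mulVec, hAinv] using this
      have : x = c • 1 := by linear_combination (norm := module) hz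
      rw [this]
      exact Submodule.smul_mem _ _ (Submodule.mem_span_singleton_self _)
    · rw [Submodule.span_le, Set.singleton_subset_iff]
      simpa [LinearMap.mem_ker, Matrix.toLin'_apply] using hD1
  · intro hker
    rw [Matrix.isUnit_iff_isUnit_det, isUnit_iff_ne_zero]
    intro hdet
    obtain ⟨v, hv, hAv⟩ := (Matrix.exists_mulVec_eq_zero_iff).2 hdet
    obtain ⟨hDv, htLv⟩ := key v hAv
    have : v ∈ LinearMap.ker (Matrix.toLin' D) := by
      simp [LinearMap.mem_ker, Matrix.toLin'_apply, hDv]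
    rw [hker, Submodule.mem_span_singleton] at this
    obtain ⟨a, ha⟩ := this
    rw [← ha] at htLv
    rw [dotProduct_smul, htL1] at htLv
    simp at htLv
    exact hv (by rw [← ha, htLv]; simp)
end

section
/- Let D, M ∈ ℝ^{s×s} and t_L ∈ ℝ^s with M invertible, D·𝟙 = 0, t_Lᵀ·𝟙 = 1, and suppose D + M⁻¹·t_L·t_Lᵀ is invertible. Then for every f ∈ ℝ^s and u₀ ∈ ℝ, a vector u ∈ ℝ^s satisfies the SBP-SAT equation D·u = f + M⁻¹·t_L·(u₀ − t_Lᵀ·u) if and only if u = u₀·𝟙 + (D + M⁻¹·t_L·t_Lᵀ)⁻¹·f. -/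
open Matrix

lemma sbp_aux_vecMulVec {s : ℕ} (tL v : Fin s → ℝ) :
    vecMulVec tL tL *ᵥ v = (tL ⬝ᵥ v) • tL := by
  ext i
  simp [vecMulVec_apply, mulVec, dotProduct, Finset.mul_sum, mul_comm, mul_left_comm]

/-- With `M` invertible, `D *ᵥ 1 = 0`, `t_L ⬝ᵥ 1 = 1`, and
`D + M⁻¹ t_L t_Lᵀ` invertible, a vector `u` solves the SBP-SAT scheme
`D u = f + M⁻¹ t_L (u₀ − t_Lᵀ u)` iff `u = u₀ 𝟙 + (D + M⁻¹ t_L t_Lᵀ)⁻¹ f`. -/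
theorem sbp_sat_solution_characterization
    {s : ℕ} (hs : 1 ≤ s)
    (D M : Matrix (Fin s) (Fin s) ℝ) (tL : Fin s → ℝ)
    (hM : IsUnit M)
    (hD1 : D *ᵥ (1 : Fin s → ℝ) = 0)
    (htL1 : tL ⬝ᵥ (1 : Fin s → ℝ) = 1)
    (hInv : IsUnit (D + M⁻¹ * vecMulVec tL tL))
    (f : Fin s → ℝ) (u₀ : ℝ) (u : Fin s → ℝ) :
    D *ᵥ u = f + (u₀ - tL ⬝ᵥ u) • (M⁻¹ *ᵥ tL) ↔
      u = u₀ • (1 : Fin s → ℝ) + (D + M⁻¹ * vecMulVec tL tL)⁻¹ *ᵥ f := by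
  set A := D + M⁻¹ * vecMulVec tL tL with hA
  have hAv : ∀ v : Fin s → ℝ, A *ᵥ v = D *ᵥ v + (tL ⬝ᵥ v) • (M⁻¹ *ᵥ tL) := by
    intro v
    rw [hA, add_mulVec, ← mulVec_mulVec, sbp_aux_vecMulVec, mulVec_smul]
  have hdet : IsUnit A.det := (Matrix.isUnit_iff_isUnit_det A).mp hInv
  have hinv_cancel : ∀ v : Fin s → ℝ, A⁻¹ *ᵥ (A *ᵥ v) = v := by
    intro v
    rw [mulVec_mulVec, Matrix.nonsing_inv_mul A hdet, one_mulVec]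
  have hcancel : ∀ v : Fin s → ℝ, A *ᵥ (A⁻¹ *ᵥ v) = v := by
    intro v
    rw [mulVec_mulVec, Matrix.mul_nonsing_inv A hdet, one_mulVec]
  have hA1 : A *ᵥ (1 : Fin s → ℝ) = M⁻¹ *ᵥ tL := by
    rw [hAv, hD1, htL1, zero_add, one_smul]
  have key : (D *ᵥ u = f + (u₀ - tL ⬝ᵥ u) • (M⁻¹ *ᵥ tL)) ↔
      A *ᵥ u = A *ᵥ (u₀ • (1 : Fin s → ℝ) + A⁻¹ *ᵥ f) := by
    rw [hAv u, mulVec_add, mulVec_smul, hA1, hcancel]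
    constructor
    · intro h
      rw [h]
      ext i
      simp [sub_smul]
      ring
    · intro h
      have := congrArg (fun x => x - (tL ⬝ᵥ u) • (M⁻¹ *ᵥ tL)) h
      simp only [add_sub_cancel_right] at this
      rw [this]
      ext i
      simp [sub_smul]
      ring
  rw [key]
  constructor
  · intro h
    have := congrArg (fun x => A⁻¹ *ᵥ x) h
    simpa [hinv_cancel] using this
  · intro h; rw [h]
end

section
/- Let D, M ∈ ℝ^{s×s} and t_L, t_R ∈ ℝ^s, where M is symmetric positive definite and invertible, M·D + (M·D)ᵀ = t_R·t_Rᵀ − t_L·t_Lᵀ, D·𝟙 = 0, t_Lᵀ·𝟙 = 1 and t_Rᵀ·𝟙 = 1. Then the row vector 𝟙ᵀ·M·(D + M⁻¹·t_L·t_Lᵀ) equals t_Rᵀ; consequently, if D + M⁻¹·t_L·t_Lᵀ is invertible, then t_Rᵀ·(D + M⁻¹·t_L·t_Lᵀ)⁻¹ = 𝟙ᵀ·M, so the SBP-SAT scheme is a Runge–Kutta method with weight vector b = M·𝟙 (up to the time scaling). -/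
open Matrix

lemma vecMul_vecMulVec' {s : ℕ} (x a b : Fin s → ℝ) :
    x ᵥ* vecMulVec a b = (x ⬝ᵥ a) • b := by
  funext j
  simp only [vecMulVec, vecMul, dotProduct, Pi.smul_apply, smul_eq_mul, of_apply]
  rw [Finset.sum_mul]
  exact Finset.sum_congr rfl fun i _ => by ring

/-- Under the SBP property and the consistency assumptions,
`𝟙ᵀ M (D + M⁻¹ t_L t_Lᵀ) = t_Rᵀ`; consequently, if `D + M⁻¹ t_L t_Lᵀ` is
invertible, `t_Rᵀ (D + M⁻¹ t_L t_Lᵀ)⁻¹ = 𝟙ᵀ M`, i.e. the SBP-SAT scheme is a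
Runge-Kutta method with weights `b = M 𝟙` (up to time scaling). -/
theorem sbp_sat_runge_kutta_weights
    {s : ℕ} (hs : 1 ≤ s)
    (D M : Matrix (Fin s) (Fin s) ℝ) (tL tR : Fin s → ℝ)
    (hM : M.PosDef) (hMinv : IsUnit M)
    (hSBP : M * D + (M * D)ᵀ = vecMulVec tR tR - vecMulVec tL tL)
    (hD1 : D *ᵥ (1 : Fin s → ℝ) = 0)
    (htL1 : tL ⬝ᵥ (1 : Fin s → ℝ) = 1)
    (htR1 : tR ⬝ᵥ (1 : Fin s → ℝ) = 1) :
    (1 : Fin s → ℝ) ᵥ* (M * (D + M⁻¹ * vecMulVec tL tL)) = tR ∧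
      (IsUnit (D + M⁻¹ * vecMulVec tL tL) →
        tR ᵥ* (D + M⁻¹ * vecMulVec tL tL)⁻¹ = (1 : Fin s → ℝ) ᵥ* M) := by
  have hdet : IsUnit M.det := (Matrix.isUnit_iff_isUnit_det M).mp hMinv
  have hcancel : M * (M⁻¹ * vecMulVec tL tL) = vecMulVec tL tL :=
    Matrix.mul_nonsing_inv_cancel_left M _ hdet
  have hMD : M * D = vecMulVec tR tR - vecMulVec tL tL - (M * D)ᵀ := by
    rw [← hSBP]; exact (add_sub_cancel_right _ _).symm
  have htrans : (1 : Fin s → ℝ) ᵥ* (M * D)ᵀ = 0 := by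
    rw [Matrix.vecMul_transpose, ← Matrix.mulVec_mulVec, hD1, Matrix.mulVec_zero]
  have key : (1 : Fin s → ℝ) ᵥ* (M * (D + M⁻¹ * vecMulVec tL tL)) = tR := by
    rw [Matrix.mul_add, hcancel, Matrix.vecMul_add, hMD]
    rw [Matrix.vecMul_sub, Matrix.vecMul_sub, htrans,
      vecMul_vecMulVec', vecMul_vecMulVec']
    rw [dotProduct_comm tR, dotProduct_comm tL] at *
    rw [htL1, htR1]
    simp
  refine ⟨key, fun hA => ?_⟩
  have hAdet : IsUnit (D + M⁻¹ * vecMulVec tL tL).det :=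
    (Matrix.isUnit_iff_isUnit_det _).mp hA
  have : ((1 : Fin s → ℝ) ᵥ* M) ᵥ* (D + M⁻¹ * vecMulVec tL tL) = tR := by
    rw [Matrix.vecMul_vecMul]; exact key
  rw [← this, Matrix.vecMul_vecMul, Matrix.mul_nonsing_inv _ hAdet, Matrix.vecMul_one]
end

section
/- Let D, M ∈ ℝ^{s×s} and t_L, t_R ∈ ℝ^s, where M is symmetric positive definite and M·D + (M·D)ᵀ = t_R·t_Rᵀ − t_L·t_Lᵀ. Let λ ∈ ℂ with Re λ ≤ 0, u₀ ∈ ℂ, and let u ∈ ℂ^s satisfy the (entrywise complexified) SBP-SAT equation M·(D·u) = λ·(M·u) + (u₀ − t_Lᵀ·u)·t_L. Then |t_Rᵀ·u| ≤ |u₀|, i.e. the SBP-SAT scheme is A stable. -/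
open Matrix

lemma conj_quad {s : ℕ} (P : Matrix (Fin s) (Fin s) ℝ) (u : Fin s → ℂ) :
    star (star u ⬝ᵥ ((P.map Complex.ofReal) *ᵥ u)) =
      star u ⬝ᵥ ((Pᵀ.map Complex.ofReal) *ᵥ u) := by
  simp only [dotProduct, mulVec, Matrix.map_apply, Matrix.transpose_apply,
    star_sum, star_mul', star_star, Complex.star_def, Complex.conj_ofReal,
    Finset.mul_sum]
  rw [Finset.sum_comm]
  refine Finset.sum_congr rfl fun i _ => Finset.sum_congr rfl fun j _ => ?_
  simp [Pi.star_apply, Complex.star_def, Complex.conj_conj]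
  ring

lemma re_quad {s : ℕ} (P : Matrix (Fin s) (Fin s) ℝ) (u : Fin s → ℂ) :
    (star u ⬝ᵥ ((P.map Complex.ofReal) *ᵥ u)).re =
      (fun i => (u i).re) ⬝ᵥ (P *ᵥ fun i => (u i).re) +
      (fun i => (u i).im) ⬝ᵥ (P *ᵥ fun i => (u i).im) := by
  simp only [dotProduct, mulVec, Matrix.map_apply, ← Finset.sum_add_distrib,
    Complex.re_sum, Finset.mul_sum, Complex.mul_re, Complex.ofReal_re, Complex.ofReal_im]
  congr 1; ext i; congr 1; ext j
  simp [Complex.mul_re, Complex.mul_im]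

lemma quad_vecMulVec {s : ℕ} (t : Fin s → ℝ) (u : Fin s → ℂ) :
    star u ⬝ᵥ (((vecMulVec t t).map Complex.ofReal) *ᵥ u) =
      star ((fun i => (t i : ℂ)) ⬝ᵥ u) * ((fun i => (t i : ℂ)) ⬝ᵥ u) := by
  calc star u ⬝ᵥ (((vecMulVec t t).map Complex.ofReal) *ᵥ u)
      = (∑ i, (t i : ℂ) * star (u i)) * (∑ j, (t j : ℂ) * u j) := by
        rw [Finset.sum_mul]
        simp only [dotProduct, mulVec, Matrix.map_apply, vecMulVec_apply, Finset.mul_sum,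
          Finset.sum_mul]
        refine Finset.sum_congr rfl fun i _ => Finset.sum_congr rfl fun j _ => ?_
        push_cast
        simp only [Pi.star_apply]
        ring
    _ = star ((fun i => (t i : ℂ)) ⬝ᵥ u) * ((fun i => (t i : ℂ)) ⬝ᵥ u) := by
        simp [dotProduct, Complex.star_def, Complex.conj_ofReal, mul_comm]

/-- A stability of the SBP-SAT scheme. If `Re λ ≤ 0` and `u ∈ ℂ^s`
solves the complexified SBP-SAT equation
`M (D u) = λ (M u) + (u₀ − t_Lᵀ u) t_L`, then `|t_Rᵀ u| ≤ |u₀|`. -/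
theorem sbp_sat_A_stable
    {s : ℕ} (hs : 1 ≤ s)
    (D M : Matrix (Fin s) (Fin s) ℝ) (tL tR : Fin s → ℝ)
    (hM : M.PosDef)
    (hSBP : M * D + (M * D)ᵀ = vecMulVec tR tR - vecMulVec tL tL)
    (lam : ℂ) (hlam : lam.re ≤ 0) (u₀ : ℂ) (u : Fin s → ℂ)
    (hu : (M.map Complex.ofReal) *ᵥ ((D.map Complex.ofReal) *ᵥ u) =
        lam • ((M.map Complex.ofReal) *ᵥ u) +
          (u₀ - (fun i => (tL i : ℂ)) ⬝ᵥ u) • (fun i => (tL i : ℂ))) :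
    ‖(fun i => (tR i : ℂ)) ⬝ᵥ u‖ ≤ ‖u₀‖ := by
  set tlc : Fin s → ℂ := fun i => (tL i : ℂ) with htlc
  set trc : Fin s → ℂ := fun i => (tR i : ℂ) with htrc
  set l : ℂ := tlc ⬝ᵥ u with hl
  set r : ℂ := trc ⬝ᵥ u with hr
  set q : ℂ := star u ⬝ᵥ ((M.map Complex.ofReal) *ᵥ u) with hq
  have hstar_tl : star tlc = tlc := by
    funext i; simp [htlc, Complex.star_def, Complex.conj_ofReal]
  have hmap : (M.map Complex.ofReal) * (D.map Complex.ofReal) = (M * D).map Complex.ofReal := by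
    exact (Matrix.map_mul (f := Complex.ofRealHom)).symm
  set A : ℂ := star u ⬝ᵥ (((M * D).map Complex.ofReal) *ᵥ u) with hA_def
  have hA : A = lam * q + (u₀ - l) * star l := by
    have h1 := congrArg (fun v => star u ⬝ᵥ v) hu
    simp only [dotProduct_add, dotProduct_smul, smul_eq_mul] at h1
    rw [Matrix.mulVec_mulVec, hmap] at h1
    rw [hA_def, h1, ← hq]
    congr 1
    rw [← hstar_tl, star_dotProduct_star, ← hl]
  have hconj : A + star A = star r * r - star l * l := by
    rw [hA_def, conj_quad]
    have key : star u ⬝ᵥ ((M * D).map Complex.ofReal *ᵥ u)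
        + star u ⬝ᵥ ((M * D)ᵀ.map Complex.ofReal *ᵥ u)
        = star u ⬝ᵥ ((((M * D) + (M * D)ᵀ).map Complex.ofReal) *ᵥ u) := by
      rw [Matrix.map_add _ Complex.ofReal_add, Matrix.add_mulVec, dotProduct_add]
    rw [key, hSBP, Matrix.map_sub _ Complex.ofReal_sub, Matrix.sub_mulVec, dotProduct_sub,
      quad_vecMulVec, quad_vecMulVec, ← htlc, ← htrc, ← hl, ← hr]
  have hq_real : star q = q := by
    rw [hq, conj_quad]
    have hsymm : Mᵀ = M := by
      have := hM.isHermitian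
      simpa [Matrix.IsHermitian] using this
    rw [hsymm]
  have hq_im : q.im = 0 := by
    have := congrArg Complex.im hq_real
    simp [Complex.star_def] at this
    linarith
  have hq_re : 0 ≤ q.re := by
    rw [hq, re_quad]
    have h1 := hM.posSemidef.dotProduct_mulVec_nonneg (fun i => (u i).re)
    have h2 := hM.posSemidef.dotProduct_mulVec_nonneg (fun i => (u i).im)
    simp only [star_trivial] at h1 h2
    exact add_nonneg h1 h2
  have hre : 2 * A.re = Complex.normSq r - Complex.normSq l := by
    have h := congrArg Complex.re hconj
    simp only [Complex.add_re, Complex.sub_re, Complex.star_def, Complex.mul_re,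
      Complex.conj_re, Complex.conj_im] at h
    rw [Complex.normSq_apply, Complex.normSq_apply]
    linarith
  have hAre : A.re = lam.re * q.re + (u₀ * star l).re - Complex.normSq l := by
    have h := congrArg Complex.re hA
    simp only [Complex.add_re, Complex.mul_re, Complex.sub_re, Complex.sub_im,
      Complex.star_def, Complex.conj_re, Complex.conj_im, hq_im] at h
    rw [Complex.normSq_apply]
    simp only [Complex.mul_re, Complex.star_def, Complex.conj_re, Complex.conj_im]
    linarith
  have hns : Complex.normSq r ≤ Complex.normSq u₀ := by
    have hsub : 0 ≤ Complex.normSq (u₀ - l) := Complex.normSq_nonneg _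
    rw [Complex.normSq_sub] at hsub
    have hq0 : lam.re * q.re ≤ 0 := mul_nonpos_of_nonpos_of_nonneg hlam hq_re
    have hre2 : (u₀ * star l).re = (u₀ * (starRingEnd ℂ) l).re := rfl
    nlinarith [hre, hAre]
  have := Real.sqrt_le_sqrt hns
  simpa [Complex.norm_def] using this
end

section
/- Let D, M ∈ ℝ^{s×s} and t_L, t_R ∈ ℝ^s, where M is symmetric positive definite and M·D + (M·D)ᵀ = t_R·t_Rᵀ − t_L·t_Lᵀ. Then for every λ ∈ ℂ with Re λ < 0, the complex matrix obtained by entrywise complexifying D + M⁻¹·t_L·t_Lᵀ and subtracting λ·I is invertible; in particular the SBP-SAT scheme for the scalar test equation u' = λu is uniquely solvable whenever Re λ < 0. -/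
open Matrix

/-- Complexification of a real vector. -/
noncomputable def sbpCplx {s : ℕ} (c : Fin s → ℝ) : Fin s → ℂ := fun i => (c i : ℂ)

lemma sbp_star_cplx {s : ℕ} (c : Fin s → ℝ) : star (sbpCplx c) = sbpCplx c := by
  funext i
  simp [sbpCplx]

lemma sbp_vecMulVec_map {s : ℕ} (c : Fin s → ℝ) :
    (vecMulVec c c).map Complex.ofReal = vecMulVec (sbpCplx c) (sbpCplx c) := by
  ext i j
  simp [vecMulVec_apply, sbpCplx]

lemma sbp_vecMulVec_mulVec {s : ℕ} (a b : Fin s → ℂ) (v : Fin s → ℂ) :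
    vecMulVec a b *ᵥ v = (b ⬝ᵥ v) • a := by
  funext i
  simp only [mulVec, dotProduct, vecMulVec_apply, Pi.smul_apply, smul_eq_mul,
    Finset.sum_mul]
  exact Finset.sum_congr rfl fun j _ => by ring

lemma sbp_quad_vecMulVec {s : ℕ} (c : Fin s → ℝ) (v : Fin s → ℂ) :
    star v ⬝ᵥ ((vecMulVec c c).map Complex.ofReal *ᵥ v)
      = Complex.normSq (sbpCplx c ⬝ᵥ v) := by
  rw [sbp_vecMulVec_map, sbp_vecMulVec_mulVec, dotProduct_smul]
  have h1 : star v ⬝ᵥ sbpCplx c = star (sbpCplx c ⬝ᵥ v) := by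
    simp only [dotProduct, star_sum, star_mul', Pi.star_apply]
    refine Finset.sum_congr rfl fun j _ => ?_
    simp only [sbpCplx, Complex.star_def, Complex.conj_ofReal]
    ring
  rw [smul_eq_mul, h1]
  exact Complex.mul_conj _

/-- For an SBP operator and any `λ ∈ ℂ` with `Re λ < 0`, the
complexified matrix `(D + M⁻¹ t_L t_Lᵀ) − λ I` is invertible; i.e. the SBP-SAT
scheme for `u' = λ u` is uniquely solvable whenever `Re λ < 0`. -/
theorem sbp_sat_solvable_of_re_neg
    {s : ℕ} (hs : 1 ≤ s)
    (D M : Matrix (Fin s) (Fin s) ℝ) (tL tR : Fin s → ℝ)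
    (hM : M.PosDef)
    (hSBP : M * D + (M * D)ᵀ = vecMulVec tR tR - vecMulVec tL tL)
    (lam : ℂ) (hlam : lam.re < 0) :
    IsUnit ((D + M⁻¹ * vecMulVec tL tL).map Complex.ofReal -
      lam • (1 : Matrix (Fin s) (Fin s) ℂ)) := by
  classical
  set A : Matrix (Fin s) (Fin s) ℝ := D + M⁻¹ * vecMulVec tL tL with hAdef
  by_contra hunit
  rw [Matrix.isUnit_iff_isUnit_det, isUnit_iff_ne_zero, not_not] at hunit
  obtain ⟨v, hv0, hv⟩ := Matrix.exists_mulVec_eq_zero_iff.mpr hunit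
  -- eigen equation
  have heig : A.map Complex.ofReal *ᵥ v = lam • v := by
    rw [Matrix.sub_mulVec, sub_eq_zero] at hv
    rw [hv, Matrix.smul_mulVec, Matrix.one_mulVec]
  -- M is invertible
  have hMdet : IsUnit M.det := hM.det_pos.ne'.isUnit
  -- key algebraic identity
  have hMA : M * A = M * D + vecMulVec tL tL := by
    rw [hAdef, Matrix.mul_add, ← Matrix.mul_assoc, Matrix.mul_nonsing_inv M hMdet,
      Matrix.one_mul]
  have hTsym : (vecMulVec tL tL)ᵀ = vecMulVec tL tL := by
    ext i j
    simp [vecMulVec_apply, mul_comm]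
  have hsum : M * A + (M * A)ᵀ = vecMulVec tR tR + vecMulVec tL tL := by
    rw [hMA, Matrix.transpose_add, hTsym]
    have h2 : M * D + (M * D)ᵀ + (vecMulVec tL tL + vecMulVec tL tL)
        = vecMulVec tR tR + vecMulVec tL tL := by
      rw [hSBP]; abel
    calc M * D + vecMulVec tL tL + ((M * D)ᵀ + vecMulVec tL tL)
        = M * D + (M * D)ᵀ + (vecMulVec tL tL + vecMulVec tL tL) := by abel
      _ = vecMulVec tR tR + vecMulVec tL tL := h2
  -- the energy
  set Mc : Matrix (Fin s) (Fin s) ℂ := M.map Complex.ofReal with hMc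
  set E : ℂ := star v ⬝ᵥ (Mc *ᵥ v) with hE
  -- real and imaginary parts of E
  set vr : Fin s → ℝ := fun i => (v i).re with hvr
  set vi : Fin s → ℝ := fun i => (v i).im with hvi
  have hMsym : ∀ i j, M j i = M i j := by
    intro i j
    have := hM.1
    rw [Matrix.IsHermitian] at this
    have := congrFun (congrFun this i) j
    simpa [Matrix.conjTranspose_apply] using this
  have hEre : E.re = vr ⬝ᵥ (M *ᵥ vr) + vi ⬝ᵥ (M *ᵥ vi) := by
    rw [hE]
    simp only [dotProduct, mulVec, Mc, Matrix.map_apply, Pi.star_apply]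
    rw [Complex.re_sum]
    simp only [Finset.mul_sum, Complex.re_sum, Finset.sum_add_distrib.symm]
    refine Finset.sum_congr rfl fun i _ => Finset.sum_congr rfl fun j _ => ?_
    simp only [Complex.mul_re, Complex.mul_im, Complex.star_def, Complex.conj_re,
      Complex.conj_im, Complex.ofReal_re, Complex.ofReal_im, vr, vi]
    ring
  have hEim : E.im = 0 := by
    rw [hE]
    simp only [dotProduct, mulVec, Mc, Matrix.map_apply, Pi.star_apply]
    rw [Complex.im_sum]
    simp only [Finset.mul_sum, Complex.im_sum]
    have hterm : ∀ i j, (star (v i) * ((M i j : ℂ) * v j)).im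
        = M i j * (vr i * vi j) - M i j * (vi i * vr j) := by
      intro i j
      simp only [Complex.mul_im, Complex.mul_re, Complex.star_def, Complex.conj_re,
        Complex.conj_im, Complex.ofReal_re, Complex.ofReal_im, vr, vi]
      ring
    calc (∑ i, ∑ j, (star (v i) * ((M i j : ℂ) * v j)).im)
        = ∑ i, ∑ j, (M i j * (vr i * vi j) - M i j * (vi i * vr j)) :=
          Finset.sum_congr rfl fun i _ => Finset.sum_congr rfl fun j _ => hterm i j
      _ = (∑ i, ∑ j, M i j * (vr i * vi j)) - ∑ i, ∑ j, M i j * (vi i * vr j) := by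
          simp [Finset.sum_sub_distrib]
      _ = 0 := by
          rw [sub_eq_zero]
          rw [Finset.sum_comm]
          refine Finset.sum_congr rfl fun i _ => Finset.sum_congr rfl fun j _ => ?_
          rw [hMsym i j]
          ring
  -- E.re > 0
  have hvne : vr ≠ 0 ∨ vi ≠ 0 := by
    by_contra h
    push_neg at h
    apply hv0
    funext i
    have h1 := congrFun h.1 i
    have h2 := congrFun h.2 i
    simp only [vr, vi, Pi.zero_apply] at h1 h2
    exact Complex.ext h1 h2
  have hqr : (0:ℝ) ≤ vr ⬝ᵥ (M *ᵥ vr) := by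
    have := hM.posSemidef.dotProduct_mulVec_nonneg vr
    simpa using this
  have hqi : (0:ℝ) ≤ vi ⬝ᵥ (M *ᵥ vi) := by
    have := hM.posSemidef.dotProduct_mulVec_nonneg vi
    simpa using this
  have hErepos : 0 < E.re := by
    rw [hEre]
    rcases hvne with h | h
    · have := hM.dotProduct_mulVec_pos h
      simp only [star_trivial] at this
      linarith
    · have := hM.dotProduct_mulVec_pos h
      simp only [star_trivial] at this
      linarith
  -- the quadratic form identity
  have hmapmul : (M * A).map Complex.ofReal = Mc * A.map Complex.ofReal := by
    rw [hMc]
    exact Matrix.map_mul (f := Complex.ofRealHom)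
  have hq1 : star v ⬝ᵥ ((M * A).map Complex.ofReal *ᵥ v) = lam * E := by
    rw [hmapmul, ← Matrix.mulVec_mulVec, heig, Matrix.mulVec_smul, dotProduct_smul,
      smul_eq_mul, hE]
  have hq2 : star v ⬝ᵥ ((M * A)ᵀ.map Complex.ofReal *ᵥ v) = star (lam * E) := by
    have hct : (M * A)ᵀ.map Complex.ofReal = ((M * A).map Complex.ofReal)ᴴ := by
      ext i j
      simp only [Matrix.map_apply, Matrix.transpose_apply, Matrix.conjTranspose_apply,
        Complex.star_def, Complex.conj_ofReal]
    rw [hct, ← hq1]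
    set N := (M * A).map Complex.ofReal with hN
    simp only [dotProduct, mulVec, Matrix.conjTranspose_apply, Pi.star_apply,
      Finset.mul_sum, star_sum, star_mul', star_star]
    rw [Finset.sum_comm]
    refine Finset.sum_congr rfl fun i _ => Finset.sum_congr rfl fun j _ => ?_
    ring
  -- combine
  have hS : lam * E + star (lam * E)
      = Complex.normSq (sbpCplx tR ⬝ᵥ v) + Complex.normSq (sbpCplx tL ⬝ᵥ v) := by
    rw [← hq2, ← hq1]
    have : star v ⬝ᵥ ((M * A).map Complex.ofReal *ᵥ v)
          + star v ⬝ᵥ ((M * A)ᵀ.map Complex.ofReal *ᵥ v)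
        = star v ⬝ᵥ (((M * A + (M * A)ᵀ).map Complex.ofReal) *ᵥ v) := by
      rw [Matrix.map_add, Matrix.add_mulVec, dotProduct_add]
      exact Complex.ofReal_add
    rw [this, hsum, Matrix.map_add, Matrix.add_mulVec, dotProduct_add,
      sbp_quad_vecMulVec, sbp_quad_vecMulVec]
    exact Complex.ofReal_add
  -- take real parts
  have hre : (lam * E + star (lam * E)).re = 2 * (lam.re * E.re) := by
    rw [Complex.add_re]
    have : (star (lam * E)).re = (lam * E).re := Complex.conj_re _
    rw [this, Complex.mul_re, hEim]
    ring
  have hrhs : (0:ℝ) ≤ ((Complex.normSq (sbpCplx tR ⬝ᵥ v) : ℂ)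
      + (Complex.normSq (sbpCplx tL ⬝ᵥ v) : ℂ)).re := by
    simp only [Complex.add_re, Complex.ofReal_re]
    exact add_nonneg (Complex.normSq_nonneg _) (Complex.normSq_nonneg _)
  have hlt : 2 * (lam.re * E.re) < 0 := by
    have := mul_pos (neg_pos.mpr hlam) hErepos
    nlinarith
  rw [← hre, hS] at hlt
  exact absurd hrhs (not_le.mpr hlt)
end

section
/- Let D, M ∈ ℝ^{s×s} with s ≥ 1, M symmetric positive definite, suppose the kernel of D (as a linear map ℝ^s → ℝ^s) is exactly the span of 𝟙, and let o ∈ ℝ^s be nonzero with Dᵀ·M·o = 0. Define F = I − o·(M·o)ᵀ/(oᵀ·M·o). Then F·F = F, the matrix M·F is symmetric, and the range of F (as a linear map ℝ^s → ℝ^s) equals the range of D; that is, F is the M-orthogonal projection onto the image of D. -/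
open Matrix

/-- The filter `F = I − o (M o)ᵀ / (oᵀ M o)` associated with a
grid-oscillation vector `o` (nonzero, `Dᵀ M o = 0`) of a nullspace consistent
SBP operator is the `M`-orthogonal projection onto the image of `D`:
`F F = F`, `M F` is symmetric, and `range F = range D`. -/
theorem filter_is_M_orthogonal_projection_onto_range_D
    {s : ℕ} (hs : 1 ≤ s)
    (D M : Matrix (Fin s) (Fin s) ℝ)
    (hM : M.PosDef)
    (hker : LinearMap.ker (Matrix.toLin' D) = Submodule.span ℝ {(1 : Fin s → ℝ)})
    (o : Fin s → ℝ) (ho : o ≠ 0) (hoD : Dᵀ *ᵥ (M *ᵥ o) = 0)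
    (F : Matrix (Fin s) (Fin s) ℝ)
    (hF : F = 1 - (o ⬝ᵥ (M *ᵥ o))⁻¹ • vecMulVec o (M *ᵥ o)) :
    F * F = F ∧ (M * F)ᵀ = M * F ∧
      LinearMap.range (Matrix.toLin' F) = LinearMap.range (Matrix.toLin' D) := by
  have hc : 0 < o ⬝ᵥ (M *ᵥ o) := by
    have := hM.re_dotProduct_pos ho
    simpa using this
  have hcne : o ⬝ᵥ (M *ᵥ o) ≠ 0 := ne_of_gt hc
  set c : ℝ := o ⬝ᵥ (M *ᵥ o) with hcdef
  set w : Fin s → ℝ := M *ᵥ o with hw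
  set P : Matrix (Fin s) (Fin s) ℝ := vecMulVec o w with hP
  -- P * P = c • P
  have hPP : P * P = c • P := by
    rw [hP]
    ext i j
    simp only [mul_apply, vecMulVec_apply, Matrix.smul_apply, smul_eq_mul]
    have h2 : w ⬝ᵥ o = c := by rw [hcdef, dotProduct_comm]
    calc ∑ k, o i * w k * (o k * w j)
        = (w ⬝ᵥ o) * (o i * w j) := by
          simp only [dotProduct, Finset.sum_mul]
          exact Finset.sum_congr rfl fun k _ => by ring
      _ = c * (o i * w j) := by rw [h2]
  set Q : Matrix (Fin s) (Fin s) ℝ := c⁻¹ • P with hQ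
  have hQQ : Q * Q = Q := by
    rw [hQ, smul_mul_assoc, mul_smul_comm, hPP, smul_smul, smul_smul]
    congr 1
    field_simp
  have h1 : F * F = F := by
    rw [hF]
    show (1 - Q) * (1 - Q) = 1 - Q
    have : (1 - Q) * (1 - Q) = 1 - Q - Q + Q * Q := by noncomm_ring
    rw [this, hQQ]; abel
  have hMsymm : Mᵀ = M := hM.1
  have hMP : M * P = vecMulVec w w := by
    rw [hP, hw]
    ext i j
    simp only [mul_apply, vecMulVec_apply, mulVec, dotProduct, Finset.sum_mul]
    apply Finset.sum_congr rfl; intros; ring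
  have h2 : (M * F)ᵀ = M * F := by
    rw [hF]
    show (M * (1 - Q))ᵀ = M * (1 - Q)
    rw [mul_sub, mul_one, hQ, mul_smul_comm, hMP, transpose_sub, transpose_smul,
      hMsymm]
    congr 1
    ext i j
    simp [vecMulVec_apply, mul_comm]
  refine ⟨h1, h2, ?_⟩
  -- F *ᵥ x = x - c⁻¹ * (w ⬝ᵥ x) • o
  have hFx : ∀ x : Fin s → ℝ, F *ᵥ x = x - (c⁻¹ * (w ⬝ᵥ x)) • o := by
    intro x
    rw [hF, hQ, hP]
    ext i
    simp only [sub_mulVec, one_mulVec, Matrix.smul_mulVec, Pi.sub_apply,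
      Pi.smul_apply, smul_eq_mul]
    have : (vecMulVec o w *ᵥ x) i = o i * (w ⬝ᵥ x) := by
      simp only [mulVec, vecMulVec_apply, dotProduct, Finset.sum_mul, Finset.mul_sum]
      apply Finset.sum_congr rfl; intros; ring
    rw [this]; ring
  -- the functional
  let φ : (Fin s → ℝ) →ₗ[ℝ] ℝ :=
    { toFun := fun x => w ⬝ᵥ x
      map_add' := fun x y => dotProduct_add w x y
      map_smul' := fun r x => by simp [dotProduct_smul] }
  have hφo : φ o = c := by
    show w ⬝ᵥ o = c
    rw [hcdef, dotProduct_comm]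
  have hrangeF : LinearMap.range (Matrix.toLin' F) = LinearMap.ker φ := by
    apply le_antisymm
    · rintro _ ⟨x, rfl⟩
      show φ (F *ᵥ x) = 0
      rw [hFx]
      show w ⬝ᵥ (x - (c⁻¹ * (w ⬝ᵥ x)) • o) = 0
      rw [dotProduct_sub, dotProduct_smul]
      have : w ⬝ᵥ o = c := hφo
      rw [this]
      rw [smul_eq_mul]; field_simp; ring
    · intro x hx
      have hx' : w ⬝ᵥ x = 0 := hx
      refine ⟨x, ?_⟩
      show F *ᵥ x = x
      rw [hFx, hx']
      simp
  have hrangeD_le : LinearMap.range (Matrix.toLin' D) ≤ LinearMap.ker φ := by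
    rintro _ ⟨x, rfl⟩
    show w ⬝ᵥ (D *ᵥ x) = 0
    rw [dotProduct_mulVec, ← mulVec_transpose, hw, hoD]
    simp
  have hone : (1 : Fin s → ℝ) ≠ 0 := by
    have : Nonempty (Fin s) := ⟨⟨0, hs⟩⟩
    intro h
    have := congrFun h (Classical.arbitrary (Fin s))
    simp at this
  have hkerD : Module.finrank ℝ (LinearMap.ker (Matrix.toLin' D)) = 1 := by
    rw [hker, finrank_span_singleton hone]
  have hfin : Module.finrank ℝ (Fin s → ℝ) = s := by simp
  have hrangeDfin : Module.finrank ℝ (LinearMap.range (Matrix.toLin' D)) = s - 1 := by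
    have := LinearMap.finrank_range_add_finrank_ker (Matrix.toLin' D)
    rw [hkerD, hfin] at this
    omega
  have hφsurj : LinearMap.range φ = ⊤ := by
    rw [LinearMap.range_eq_top]
    intro r
    exact ⟨(r / c) • o, by simp [hφo, div_mul_cancel₀ r hcne]⟩
  have hkerφfin : Module.finrank ℝ (LinearMap.ker φ) = s - 1 := by
    have := LinearMap.finrank_range_add_finrank_ker φ
    rw [hφsurj, hfin] at this
    simp [finrank_top] at this
    omega
  have : LinearMap.range (Matrix.toLin' D) = LinearMap.ker φ :=
    Submodule.eq_of_le_of_finrank_eq hrangeD_le (by rw [hrangeDfin, hkerφfin])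
  rw [hrangeF, this]
end

section
/- Let D, M ∈ ℝ^{s×s} and t_L ∈ ℝ^s, where M is symmetric positive definite, t_Lᵀ·𝟙 = 1, the kernel of D equals the span of 𝟙, and o ∈ ℝ^s is nonzero with Dᵀ·M·o = 0. Define F = I − o·(M·o)ᵀ/(oᵀ·M·o). Then there exists a unique matrix X ∈ ℝ^{s×s} with D·X = F and t_Lᵀ·X = 0 (the row vector t_Lᵀ·X is zero); that is, the composition J·F of the discrete integral operator J with the projection F has a well-defined, unique matrix representation, and it satisfies D·(J·F) = F. -/
open Matrix

/-- For a nullspace consistent SBP operator with `t_Lᵀ 𝟙 = 1`,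
grid-oscillation vector `o` (nonzero, `Dᵀ M o = 0`) and filter
`F = I − o (M o)ᵀ / (oᵀ M o)`, there exists a unique matrix `X` with
`D X = F` and `t_Lᵀ X = 0`; i.e. the matrix representation `J F` of the
composition of the discrete integral operator with the projection is
well-defined and satisfies `D (J F) = F`. -/
theorem JF_exists_unique
    {s : ℕ} (hs : 1 ≤ s)
    (D M : Matrix (Fin s) (Fin s) ℝ) (tL : Fin s → ℝ)
    (hM : M.PosDef)
    (htL1 : tL ⬝ᵥ (1 : Fin s → ℝ) = 1)
    (hker : LinearMap.ker (Matrix.toLin' D) = Submodule.span ℝ {(1 : Fin s → ℝ)})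
    (o : Fin s → ℝ) (ho : o ≠ 0) (hoD : Dᵀ *ᵥ (M *ᵥ o) = 0)
    (F : Matrix (Fin s) (Fin s) ℝ)
    (hF : F = 1 - (o ⬝ᵥ (M *ᵥ o))⁻¹ • vecMulVec o (M *ᵥ o)) :
    ∃! X : Matrix (Fin s) (Fin s) ℝ, D * X = F ∧ tL ᵥ* X = 0 := by
  classical
  set a : Fin s → ℝ := M *ᵥ o with ha_def
  have hc : 0 < o ⬝ᵥ a := by
    have := hM.dotProduct_mulVec_pos ho
    simpa using this
  have hc0 : o ⬝ᵥ a ≠ 0 := ne_of_gt hc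
  have ha0 : a ≠ 0 := by
    intro h
    rw [h] at hc
    simp at hc
  -- a ᵥ* F = 0
  have haF : a ᵥ* F = 0 := by
    rw [hF]
    ext j
    simp only [vecMul, dotProduct, Matrix.sub_apply, Matrix.one_apply, Matrix.smul_apply,
      vecMulVec_apply, smul_eq_mul, mul_sub, Finset.sum_sub_distrib, Pi.zero_apply]
    have h2 : ∑ i, a i * ((o ⬝ᵥ a)⁻¹ * (o i * a j)) = a j := by
      calc ∑ i, a i * ((o ⬝ᵥ a)⁻¹ * (o i * a j))
          = ∑ i, (o ⬝ᵥ a)⁻¹ * (o i * a i) * a j :=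
            Finset.sum_congr rfl fun i _ => by ring
        _ = (o ⬝ᵥ a)⁻¹ * (∑ i, o i * a i) * a j := by
            rw [← Finset.sum_mul, ← Finset.mul_sum]
        _ = a j := by
            rw [show (∑ i, o i * a i) = o ⬝ᵥ a from rfl, inv_mul_cancel₀ hc0, one_mul]
    rw [show (∑ i, o i * a i) = o ⬝ᵥ a from rfl, h2]
    simp
  -- a ᵥ* D = 0
  have haD : a ᵥ* D = 0 := by
    rw [← mulVec_transpose]; exact hoD
  -- dimension setup
  have hone : (1 : Fin s → ℝ) ≠ 0 := by
    intro h
    have := congrFun h ⟨0, hs⟩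
    simp at this
  have hkerdim : Module.finrank ℝ (LinearMap.ker (Matrix.toLin' D)) = 1 := by
    rw [hker]
    exact finrank_span_singleton hone
  -- the linear functional y ↦ a ⬝ᵥ y
  let φ : (Fin s → ℝ) →ₗ[ℝ] ℝ :=
    { toFun := fun y => a ⬝ᵥ y
      map_add' := fun x y => dotProduct_add a x y
      map_smul' := fun r x => by simp [dotProduct_smul] }
  have hφsurj : Function.Surjective φ := by
    intro r
    refine ⟨(r / (a ⬝ᵥ a)) • a, ?_⟩
    have haa : a ⬝ᵥ a ≠ 0 := by
      intro h
      exact ha0 ((dotProduct_self_eq_zero).mp h)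
    show a ⬝ᵥ ((r / (a ⬝ᵥ a)) • a) = r
    rw [dotProduct_smul, smul_eq_mul, div_mul_eq_mul_div, mul_div_assoc,
      div_self haa, mul_one]
  have hrange : LinearMap.range φ = ⊤ := LinearMap.range_eq_top.mpr hφsurj
  have hfin : Module.finrank ℝ (Fin s → ℝ) = s := by
    simp [Module.finrank_pi]
  have hkerφ : Module.finrank ℝ (LinearMap.ker φ) = s - 1 := by
    have := LinearMap.finrank_range_add_finrank_ker φ
    rw [hrange, hfin] at this
    have h1 : Module.finrank ℝ (⊤ : Submodule ℝ ℝ) = 1 := by simp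
    omega
  have hrangeD : Module.finrank ℝ (LinearMap.range (Matrix.toLin' D)) = s - 1 := by
    have := LinearMap.finrank_range_add_finrank_ker (Matrix.toLin' D)
    rw [hkerdim, hfin] at this
    omega
  have hle : LinearMap.range (Matrix.toLin' D) ≤ LinearMap.ker φ := by
    rintro _ ⟨x, rfl⟩
    show a ⬝ᵥ (Matrix.toLin' D x) = 0
    rw [Matrix.toLin'_apply, dotProduct_mulVec, haD, zero_dotProduct]
  have heq : LinearMap.range (Matrix.toLin' D) = LinearMap.ker φ :=
    Submodule.eq_of_le_of_finrank_eq hle (by rw [hrangeD, hkerφ])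
  have hmem : ∀ y : Fin s → ℝ, a ⬝ᵥ y = 0 → ∃ x, D *ᵥ x = y := by
    intro y hy
    have : y ∈ LinearMap.range (Matrix.toLin' D) := by
      rw [heq]
      exact hy
    obtain ⟨x, hx⟩ := this
    exact ⟨x, by rwa [Matrix.toLin'_apply] at hx⟩
  -- D kills 1
  have hD1 : D *ᵥ (1 : Fin s → ℝ) = 0 := by
    have : (1 : Fin s → ℝ) ∈ LinearMap.ker (Matrix.toLin' D) := by
      rw [hker]
      exact Submodule.mem_span_singleton_self _
    rwa [LinearMap.mem_ker, Matrix.toLin'_apply] at this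
  -- pick columns
  have hcolF : ∀ j, a ⬝ᵥ (fun i => F i j) = 0 := by
    intro j
    have := congrFun haF j
    simpa [vecMul, dotProduct] using this
  choose x hx using fun j => hmem (fun i => F i j) (hcolF j)
  let y : Fin s → Fin s → ℝ := fun j => x j - (tL ⬝ᵥ x j) • 1
  have hDy : ∀ j, D *ᵥ y j = fun i => F i j := by
    intro j
    simp only [y, mulVec_sub, mulVec_smul, hD1, hx, smul_zero, sub_zero]
  have htLy : ∀ j, tL ⬝ᵥ y j = 0 := by
    intro j
    simp only [y, dotProduct_sub, dotProduct_smul, htL1, smul_eq_mul, mul_one, sub_self]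
  refine ⟨Matrix.of fun i j => y j i, ⟨?_, ?_⟩, ?_⟩
  · ext i j
    have := congrFun (hDy j) i
    simpa [Matrix.mul_apply, Matrix.mulVec, dotProduct] using this
  · ext j
    simpa [vecMul, dotProduct] using htLy j
  · -- uniqueness
    intro Y hY
    ext i j
    have hDX : D * Matrix.of (fun i j => y j i) = F := by
      ext i j
      have := congrFun (hDy j) i
      simpa [Matrix.mul_apply, Matrix.mulVec, dotProduct] using this
    have hsub : D * (Y - Matrix.of fun i j => y j i) = 0 := by
      rw [Matrix.mul_sub, hY.1, hDX, sub_self]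
    have hcol : D *ᵥ (fun k => Y k j - y j k) = 0 := by
      ext i
      have := congrFun (congrFun hsub i) j
      simpa [Matrix.mul_apply, Matrix.mulVec, dotProduct, Matrix.sub_apply, mul_sub,
        Finset.sum_sub_distrib] using this
    have hmem' : (fun k => Y k j - y j k) ∈ LinearMap.ker (Matrix.toLin' D) := by
      rw [LinearMap.mem_ker, Matrix.toLin'_apply]
      exact hcol
    rw [hker] at hmem'
    obtain ⟨r, hr⟩ := Submodule.mem_span_singleton.mp hmem'
    have htl : tL ⬝ᵥ (fun k => Y k j - y j k) = 0 := by
      have h1 : tL ⬝ᵥ (fun k => Y k j) = 0 := by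
        have := congrFun hY.2 j
        simpa [vecMul, dotProduct] using this
      have hsplit : (tL ⬝ᵥ fun k => Y k j - y j k)
          = (tL ⬝ᵥ fun k => Y k j) - tL ⬝ᵥ y j := by
        simp [dotProduct, mul_sub, Finset.sum_sub_distrib]
      rw [hsplit, h1, htLy j, sub_self]
    have hr0 : r = 0 := by
      rw [← hr] at htl
      simpa [dotProduct_smul, htL1] using htl
    have := congrFun hr i
    rw [hr0] at this
    simp only [Pi.smul_apply, Pi.one_apply, smul_eq_mul, zero_mul] at this
    have : Y i j - y j i = 0 := this.symm
    have := sub_eq_zero.mp this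
    simpa using this
end

section
/- Let D, M ∈ ℝ^{s×s} and t_L, t_R ∈ ℝ^s, where M is symmetric positive definite, M·D + (M·D)ᵀ = t_R·t_Rᵀ − t_L·t_Lᵀ, D·𝟙 = 0 and t_Lᵀ·𝟙 = 1. Let o ∈ ℝ^s be nonzero with Dᵀ·M·o = 0, let F = I − o·(M·o)ᵀ/(oᵀ·M·o), and let X ∈ ℝ^{s×s} satisfy D·X = F and t_Lᵀ·X = 0. Let λ ∈ ℂ with Re λ ≤ 0, u₀ ∈ ℂ, and suppose u ∈ ℂ^s satisfies (with all real data complexified entrywise) the SBP projection scheme u = u₀·𝟙 + λ·X·u. Then |t_Rᵀ·u| ≤ |u₀|; that is, the new SBP projection time integration scheme is A stable. -/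
open Matrix

namespace SBP11
variable {s : ℕ}

noncomputable def cv (v : Fin s → ℝ) : Fin s → ℂ := fun i => (v i : ℂ)

noncomputable def cm (A : Matrix (Fin s) (Fin s) ℝ) : Matrix (Fin s) (Fin s) ℂ :=
  A.map Complex.ofReal

lemma cv_dot (x y : Fin s → ℝ) : cv x ⬝ᵥ cv y = ((x ⬝ᵥ y : ℝ) : ℂ) := by
  simp [cv, dotProduct]

lemma cm_mulVec_cv (A : Matrix (Fin s) (Fin s) ℝ) (v : Fin s → ℝ) :
    cm A *ᵥ cv v = cv (A *ᵥ v) := by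
  funext i
  simp [cm, cv, mulVec, dotProduct, Matrix.map_apply]

lemma cv_vecMul_cm (A : Matrix (Fin s) (Fin s) ℝ) (v : Fin s → ℝ) :
    cv v ᵥ* cm A = cv (v ᵥ* A) := by
  funext i
  simp [cm, cv, vecMul, dotProduct, Matrix.map_apply]

lemma cm_mul (A B : Matrix (Fin s) (Fin s) ℝ) : cm (A * B) = cm A * cm B := by
  simpa [cm, Complex.ofRealHom] using
    (Matrix.map_mul (L := A) (M := B) (f := Complex.ofRealHom))

lemma star_cv (x : Fin s → ℝ) : star (cv x) = cv x := by
  funext i; simp [cv]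

lemma cm_transpose (A : Matrix (Fin s) (Fin s) ℝ) : (cm A)ᵀ = cm Aᵀ := rfl

lemma cv_one : (cv (1 : Fin s → ℝ)) = (1 : Fin s → ℂ) := by
  funext i; simp [cv]

lemma cv_zero : (cv (0 : Fin s → ℝ)) = 0 := by
  funext i; simp [cv]

lemma vecMulVec_mulVec' (w v : Fin s → ℝ) (x : Fin s → ℝ) :
    vecMulVec w v *ᵥ x = (v ⬝ᵥ x) • w := by
  funext i
  simp [vecMulVec_apply, mulVec, dotProduct, Finset.mul_sum, mul_comm, mul_assoc, mul_left_comm]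

lemma cm_add (A B : Matrix (Fin s) (Fin s) ℝ) : cm (A + B) = cm A + cm B := by
  ext i j; simp [cm]

lemma cm_sub (A B : Matrix (Fin s) (Fin s) ℝ) : cm (A - B) = cm A - cm B := by
  ext i j; simp [cm]

lemma cm_vecMulVec (v w : Fin s → ℝ) :
    cm (vecMulVec v w) = vecMulVec (cv v) (cv w) := by
  ext i j; simp [cm, cv, vecMulVec_apply]

lemma star_cm_mulVec (A : Matrix (Fin s) (Fin s) ℝ) (u : Fin s → ℂ) :
    star (cm A *ᵥ u) = cm A *ᵥ star u := by
  funext i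
  simp [cm, mulVec, dotProduct, Matrix.map_apply, Complex.conj_ofReal]

lemma star_quad (A : Matrix (Fin s) (Fin s) ℝ) (u : Fin s → ℂ) :
    star (star u ⬝ᵥ (cm A *ᵥ u)) = star u ⬝ᵥ (cm Aᵀ *ᵥ u) := by
  rw [Matrix.star_dotProduct]
  rw [star_cm_mulVec, star_star]
  rw [dotProduct_comm, Matrix.dotProduct_mulVec]
  rw [show u ᵥ* cm A = (cm A)ᵀ *ᵥ u from by
    rw [← Matrix.vecMul_transpose, Matrix.transpose_transpose]]
  rw [cm_transpose, dotProduct_comm]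

lemma quad_real (A : Matrix (Fin s) (Fin s) ℝ) (hA : Aᵀ = A) (u : Fin s → ℂ) :
    star u ⬝ᵥ (cm A *ᵥ u) =
      (((fun i => (u i).re) ⬝ᵥ (A *ᵥ fun i => (u i).re)
        + (fun i => (u i).im) ⬝ᵥ (A *ᵥ fun i => (u i).im) : ℝ) : ℂ) := by
  set a : Fin s → ℝ := fun i => (u i).re with ha
  set b : Fin s → ℝ := fun i => (u i).im with hb
  have hdec : u = cv a + Complex.I • cv b := by
    funext i
    simp [cv, ha, hb, Complex.ext_iff]
  have hsym : a ⬝ᵥ (A *ᵥ b) = b ⬝ᵥ (A *ᵥ a) := by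
    rw [Matrix.dotProduct_mulVec]
    rw [show a ᵥ* A = A *ᵥ a from by
      conv_lhs => rw [← hA]
      rw [Matrix.vecMul_transpose]]
    exact dotProduct_comm _ _
  rw [hdec]
  rw [star_add, star_smul, star_cv, star_cv]
  rw [Matrix.mulVec_add, Matrix.mulVec_smul, cm_mulVec_cv]
  rw [add_dotProduct, smul_dotProduct]
  rw [dotProduct_add, dotProduct_smul, dotProduct_add,
    dotProduct_smul]
  rw [cm_mulVec_cv] at *
  rw [cv_dot, cv_dot, cv_dot, cv_dot, hsym]
  simp [Complex.ext_iff]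

lemma mul_vecMulVec (M : Matrix (Fin s) (Fin s) ℝ) (o v : Fin s → ℝ) :
    M * vecMulVec o v = vecMulVec (M *ᵥ o) v := by
  ext i j
  simp [Matrix.mul_apply, Matrix.vecMulVec_apply, mulVec, dotProduct,
    Finset.sum_mul, mul_assoc]

lemma vecMulVec_mulVecC (w v : Fin s → ℂ) (x : Fin s → ℂ) :
    vecMulVec w v *ᵥ x = (v ⬝ᵥ x) • w := by
  funext i
  simp [vecMulVec_apply, mulVec, dotProduct, Finset.mul_sum, mul_comm, mul_assoc, mul_left_comm]

lemma psd_key (M : Matrix (Fin s) (Fin s) ℝ) (hM : M.PosDef) (hMs : Mᵀ = M)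
    (o : Fin s → ℝ) (hp : 0 < o ⬝ᵥ (M *ᵥ o)) (x : Fin s → ℝ) :
    0 ≤ x ⬝ᵥ (M *ᵥ x) - (o ⬝ᵥ (M *ᵥ o))⁻¹ * ((M *ᵥ o) ⬝ᵥ x) ^ 2 := by
  set p := o ⬝ᵥ (M *ᵥ o) with hpdef
  set c := (M *ᵥ o) ⬝ᵥ x with hcdef
  set t := c / p with htdef
  set y := x - t • o with hydef
  have h0 : 0 ≤ y ⬝ᵥ (M *ᵥ y) := by
    have := hM.posSemidef.dotProduct_mulVec_nonneg y
    simpa using this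
  have hox : o ⬝ᵥ (M *ᵥ x) = c := by
    rw [Matrix.dotProduct_mulVec]
    rw [show o ᵥ* M = M *ᵥ o from by
      conv_lhs => rw [← hMs]
      rw [Matrix.vecMul_transpose]]
  have hxo : x ⬝ᵥ (M *ᵥ o) = c := dotProduct_comm _ _
  have hexp : y ⬝ᵥ (M *ᵥ y) = x ⬝ᵥ (M *ᵥ x) - 2 * t * c + t ^ 2 * p := by
    rw [hydef, Matrix.mulVec_sub, Matrix.mulVec_smul]
    rw [sub_dotProduct, smul_dotProduct, dotProduct_sub,
      dotProduct_sub, dotProduct_smul, dotProduct_smul]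
    rw [hox, hxo, ← hpdef]
    simp only [smul_eq_mul]
    ring
  rw [hexp] at h0
  have hp' : p ≠ 0 := ne_of_gt hp
  have hkey : 2 * t * c - t ^ 2 * p = p⁻¹ * c ^ 2 := by
    rw [htdef]
    field_simp
    ring
  linarith

end SBP11

open SBP11


/-- A stability of the new SBP projection scheme. With the SBP
property, consistency, grid-oscillation vector `o`, filter `F`, and matrix
representation `X` of `J F` (`D X = F`, `t_Lᵀ X = 0`), if `Re λ ≤ 0` and
`u ∈ ℂ^s` satisfies `u = u₀ 𝟙 + λ X u`, then `|t_Rᵀ u| ≤ |u₀|`. -/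
theorem sbp_projection_A_stable
    {s : ℕ} (hs : 1 ≤ s)
    (D M : Matrix (Fin s) (Fin s) ℝ) (tL tR : Fin s → ℝ)
    (hM : M.PosDef)
    (hSBP : M * D + (M * D)ᵀ = vecMulVec tR tR - vecMulVec tL tL)
    (hD1 : D *ᵥ (1 : Fin s → ℝ) = 0)
    (htL1 : tL ⬝ᵥ (1 : Fin s → ℝ) = 1)
    (o : Fin s → ℝ) (ho : o ≠ 0) (hoD : Dᵀ *ᵥ (M *ᵥ o) = 0)
    (F : Matrix (Fin s) (Fin s) ℝ)
    (hF : F = 1 - (o ⬝ᵥ (M *ᵥ o))⁻¹ • vecMulVec o (M *ᵥ o))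
    (X : Matrix (Fin s) (Fin s) ℝ)
    (hX : D * X = F) (hXL : tL ᵥ* X = 0)
    (lam : ℂ) (hlam : lam.re ≤ 0) (u₀ : ℂ) (u : Fin s → ℂ)
    (hu : u = u₀ • (1 : Fin s → ℂ) + lam • ((X.map Complex.ofReal) *ᵥ u)) :
    ‖(fun i => (tR i : ℂ)) ⬝ᵥ u‖ ≤ ‖u₀‖ := by
  -- basic facts
  have hMs : Mᵀ = M := by
    have := hM.1
    simpa [Matrix.IsHermitian, Matrix.conjTranspose_eq_transpose_of_trivial] using this
  have hp : 0 < o ⬝ᵥ (M *ᵥ o) := by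
    have := hM.dotProduct_mulVec_pos ho
    simpa using this
  set p := o ⬝ᵥ (M *ᵥ o) with hpdef
  -- complexifications
  have hXc : X.map Complex.ofReal = cm X := rfl
  rw [hXc] at hu
  -- step 1 : tL ⬝ u = u₀
  have h1 : cv tL ⬝ᵥ u = u₀ := by
    conv_lhs => rw [hu]
    rw [dotProduct_add, dotProduct_smul, dotProduct_smul]
    rw [Matrix.dotProduct_mulVec, cv_vecMul_cm, hXL]
    rw [← cv_one, cv_dot, htL1]
    simp [cv_zero]
  -- step 2 : D u = lam • F u
  have h2 : cm D *ᵥ u = lam • (cm F *ᵥ u) := by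
    conv_lhs => rw [hu]
    rw [Matrix.mulVec_add, Matrix.mulVec_smul, Matrix.mulVec_smul]
    rw [← cv_one, cm_mulVec_cv, hD1]
    rw [Matrix.mulVec_mulVec, ← cm_mul, hX]
    simp [cv_zero]
  -- M F as symmetric matrix
  have hMF : M * F = M - p⁻¹ • vecMulVec (M *ᵥ o) (M *ᵥ o) := by
    rw [hF, Matrix.mul_sub, Matrix.mul_one, Matrix.mul_smul, SBP11.mul_vecMulVec]
  have hMFs : (M * F)ᵀ = M * F := by
    rw [hMF]
    rw [Matrix.transpose_sub, Matrix.transpose_smul, hMs]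
    congr 1
    ext i j
    simp [vecMulVec_apply, mul_comm]
  -- q = lam * W
  set a : Fin s → ℝ := fun i => (u i).re with hadef
  set b : Fin s → ℝ := fun i => (u i).im with hbdef
  set w : ℝ := a ⬝ᵥ ((M * F) *ᵥ a) + b ⬝ᵥ ((M * F) *ᵥ b) with hwdef
  have hW : star u ⬝ᵥ (cm (M * F) *ᵥ u) = (w : ℂ) := quad_real (M * F) hMFs u
  have hq : star u ⬝ᵥ (cm (M * D) *ᵥ u) = lam * (w : ℂ) := by
    rw [cm_mul, ← Matrix.mulVec_mulVec, h2, Matrix.mulVec_smul,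
      dotProduct_smul, Matrix.mulVec_mulVec, ← cm_mul, hW]
    simp
  -- w ≥ 0
  have hw0 : 0 ≤ w := by
    have hA := psd_key M hM hMs o hp a
    have hB := psd_key M hM hMs o hp b
    have hqa : a ⬝ᵥ ((M * F) *ᵥ a)
        = a ⬝ᵥ (M *ᵥ a) - p⁻¹ * ((M *ᵥ o) ⬝ᵥ a) ^ 2 := by
      rw [hMF, Matrix.sub_mulVec, dotProduct_sub]
      rw [Matrix.smul_mulVec, dotProduct_smul, vecMulVec_mulVec']
      rw [dotProduct_smul, smul_eq_mul, smul_eq_mul, dotProduct_comm a]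
      rw [dotProduct_comm a (M *ᵥ o)]
      ring
    have hqb : b ⬝ᵥ ((M * F) *ᵥ b)
        = b ⬝ᵥ (M *ᵥ b) - p⁻¹ * ((M *ᵥ o) ⬝ᵥ b) ^ 2 := by
      rw [hMF, Matrix.sub_mulVec, dotProduct_sub]
      rw [Matrix.smul_mulVec, dotProduct_smul, vecMulVec_mulVec']
      rw [dotProduct_smul, smul_eq_mul, smul_eq_mul, dotProduct_comm b]
      rw [dotProduct_comm b (M *ᵥ o)]
      ring
    rw [← hpdef] at hA hB
    rw [hwdef, hqa, hqb]
    linarith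
  -- energy identity
  have hE : star u ⬝ᵥ (cm (M * D + (M * D)ᵀ) *ᵥ u)
      = lam * (w : ℂ) + star (lam * (w : ℂ)) := by
    rw [cm_add, Matrix.add_mulVec, dotProduct_add]
    rw [← star_quad (M * D) u, hq]
  have hstarT : ∀ t : Fin s → ℝ, star u ⬝ᵥ cv t = star (cv t ⬝ᵥ u) := by
    intro t
    rw [Matrix.star_dotProduct, star_cv]
  have hRHS : star u ⬝ᵥ (cm (vecMulVec tR tR - vecMulVec tL tL) *ᵥ u)
      = ((Complex.normSq (cv tR ⬝ᵥ u) : ℂ) - Complex.normSq (cv tL ⬝ᵥ u)) := by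
    rw [cm_sub, Matrix.sub_mulVec, dotProduct_sub, cm_vecMulVec, cm_vecMulVec,
      vecMulVec_mulVecC, vecMulVec_mulVecC, dotProduct_smul, dotProduct_smul]
    rw [smul_eq_mul, smul_eq_mul, hstarT, hstarT]
    rw [show ∀ z : ℂ, z * star z = (Complex.normSq z : ℂ) from fun z => by
      rw [Complex.star_def, Complex.mul_conj]]
    rw [show ∀ z : ℂ, z * star z = (Complex.normSq z : ℂ) from fun z => by
      rw [Complex.star_def, Complex.mul_conj]]
  have hEq : ((Complex.normSq (cv tR ⬝ᵥ u) : ℂ) - Complex.normSq (cv tL ⬝ᵥ u))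
      = lam * (w : ℂ) + star (lam * (w : ℂ)) := by
    rw [← hRHS, ← hSBP, hE]
  have h2re : lam * (w : ℂ) + star (lam * (w : ℂ)) = ((2 * lam.re * w : ℝ) : ℂ) := by
    simp [Complex.ext_iff, Complex.star_def]
    ring
  have hreal : Complex.normSq (cv tR ⬝ᵥ u) - Complex.normSq (cv tL ⬝ᵥ u)
      = 2 * lam.re * w := by
    have h3 : ((Complex.normSq (cv tR ⬝ᵥ u) - Complex.normSq (cv tL ⬝ᵥ u) : ℝ) : ℂ)
        = ((2 * lam.re * w : ℝ) : ℂ) := by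
      push_cast
      rw [hEq, h2re]
      push_cast
      ring
    exact_mod_cast h3
  have hnonpos : 2 * lam.re * w ≤ 0 := by
    have : 0 ≤ (-lam.re) * w := mul_nonneg (neg_nonneg.mpr hlam) hw0
    nlinarith
  have hrl : Complex.normSq (cv tR ⬝ᵥ u) ≤ Complex.normSq (cv tL ⬝ᵥ u) := by
    linarith
  have habs : ‖cv tR ⬝ᵥ u‖ ≤ ‖cv tL ⬝ᵥ u‖ := by
    rw [Complex.norm_def, Complex.norm_def]
    exact Real.sqrt_le_sqrt hrl
  rw [h1] at habs
  exact habs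
end

section
/- Let D, M ∈ ℝ^{s×s} and t_L ∈ ℝ^s, where M is symmetric positive definite, t_Lᵀ·𝟙 = 1, and the kernel of D equals the span of 𝟙. Let o ∈ ℝ^s be nonzero with Dᵀ·M·o = 0, F = I − o·(M·o)ᵀ/(oᵀ·M·o), and X ∈ ℝ^{s×s} with D·X = F and t_Lᵀ·X = 0. Let p ≥ 1 and let τ ∈ ℝ^s satisfy D·τ^q = q·τ^{q−1} and t_Lᵀ·τ^q = 0 for all 1 ≤ q ≤ p (τ^q the componentwise power, τ^0 = 𝟙). Then q·(X·τ^{q−1}) = τ^q for all 1 ≤ q ≤ p; that is, the Runge–Kutta coefficient matrix A = J·F of the SBP projection scheme satisfies the simplifying assumption C(p). -/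
open Matrix

/-- Simplifying assumption `C(p)` for the SBP projection scheme.
For a nullspace consistent SBP operator with filter `F` and matrix
representation `X` of `J F` (`D X = F`, `t_Lᵀ X = 0`), if the node monomials
satisfy `D τ^q = q τ^(q−1)` and `t_Lᵀ τ^q = 0` for `1 ≤ q ≤ p`, then
`q (X τ^(q−1)) = τ^q` for all `1 ≤ q ≤ p`. -/
theorem sbp_projection_simplifying_C
    {s : ℕ} (hs : 1 ≤ s)
    (D M : Matrix (Fin s) (Fin s) ℝ) (tL : Fin s → ℝ)
    (hM : M.PosDef)
    (htL1 : tL ⬝ᵥ (1 : Fin s → ℝ) = 1)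
    (hker : LinearMap.ker (Matrix.toLin' D) = Submodule.span ℝ {(1 : Fin s → ℝ)})
    (o : Fin s → ℝ) (ho : o ≠ 0) (hoD : Dᵀ *ᵥ (M *ᵥ o) = 0)
    (F : Matrix (Fin s) (Fin s) ℝ)
    (hF : F = 1 - (o ⬝ᵥ (M *ᵥ o))⁻¹ • vecMulVec o (M *ᵥ o))
    (X : Matrix (Fin s) (Fin s) ℝ)
    (hX : D * X = F) (hXL : tL ᵥ* X = 0)
    (p : ℕ) (hp : 1 ≤ p)
    (τ : Fin s → ℝ)
    (hacc : ∀ q : ℕ, 1 ≤ q → q ≤ p → D *ᵥ (τ ^ q) = (q : ℝ) • (τ ^ (q - 1)))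
    (hτL : ∀ q : ℕ, 1 ≤ q → q ≤ p → tL ⬝ᵥ (τ ^ q) = 0) :
    ∀ q : ℕ, 1 ≤ q → q ≤ p → (q : ℝ) • (X *ᵥ (τ ^ (q - 1))) = τ ^ q := by
  intro q hq1 hqp
  have hpos : 0 < o ⬝ᵥ (M *ᵥ o) := by
    have := hM.dotProduct_mulVec_pos ho
    simpa using this
  have hne : (o ⬝ᵥ (M *ᵥ o)) ≠ 0 := ne_of_gt hpos
  set w : Fin s → ℝ := τ ^ (q - 1) with hw
  -- Mo is orthogonal to the range of D
  have hMoD : ∀ x : Fin s → ℝ, (M *ᵥ o) ⬝ᵥ (D *ᵥ x) = 0 := by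
    intro x
    rw [dotProduct_mulVec, ← mulVec_transpose, hoD, zero_dotProduct]
  have key : ∀ (v x : Fin s → ℝ), vecMulVec o v *ᵥ x = (v ⬝ᵥ x) • o := by
    intro v x
    ext i
    simp only [mulVec, vecMulVec_apply, dotProduct, Pi.smul_apply, smul_eq_mul,
      Finset.sum_mul]
    exact Finset.sum_congr rfl fun j _ => by ring
  -- F *ᵥ w
  have hFw : F *ᵥ w = w - ((o ⬝ᵥ (M *ᵥ o))⁻¹ * ((M *ᵥ o) ⬝ᵥ w)) • o := by
    rw [hF, sub_mulVec, one_mulVec, smul_mulVec, key, smul_smul]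
  set u : Fin s → ℝ := (q : ℝ) • (X *ᵥ w) - τ ^ q with hu
  have hDu : D *ᵥ u = -(((q : ℝ) * ((o ⬝ᵥ (M *ᵥ o))⁻¹ * ((M *ᵥ o) ⬝ᵥ w))) • o) := by
    rw [hu, mulVec_sub, mulVec_smul, mulVec_mulVec, hX, hFw, hacc q hq1 hqp, ← hw,
      smul_sub, smul_smul, sub_sub_cancel_left]
  -- dot with Mo to get the coefficient zero
  have hc : (q : ℝ) * ((o ⬝ᵥ (M *ᵥ o))⁻¹ * ((M *ᵥ o) ⬝ᵥ w)) = 0 := by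
    have h0 : (M *ᵥ o) ⬝ᵥ (D *ᵥ u) = 0 := hMoD u
    rw [hDu, dotProduct_neg, dotProduct_smul, neg_eq_zero] at h0
    have hMoo : (M *ᵥ o) ⬝ᵥ o ≠ 0 := by
      rw [dotProduct_comm]; exact hne
    have := mul_eq_zero.mp h0
    rcases this with h | h
    · exact h
    · exact absurd h hMoo
  have hDu0 : D *ᵥ u = 0 := by rw [hDu, hc, zero_smul, neg_zero]
  -- u ∈ ker D = span 𝟙
  have hmem : u ∈ Submodule.span ℝ {(1 : Fin s → ℝ)} := by
    rw [← hker]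
    simpa [Matrix.toLin'_apply] using hDu0
  obtain ⟨α, hα⟩ := Submodule.mem_span_singleton.mp hmem
  -- apply tL
  have htLu : tL ⬝ᵥ u = 0 := by
    rw [hu, dotProduct_sub, hτL q hq1 hqp, dotProduct_smul, dotProduct_mulVec, hXL,
      zero_dotProduct, smul_zero, sub_zero]
  have hα0 : α = 0 := by
    rw [← hα, dotProduct_smul, htL1, smul_eq_mul, mul_one] at htLu
    exact htLu
  have hu0 : u = 0 := by rw [← hα, hα0, zero_smul]
  have := sub_eq_zero.mp (by rw [← hu]; exact hu0)
  exact this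
end

section
/- Let D, M ∈ ℝ^{s×s} and t_L, t_R ∈ ℝ^s, where M is symmetric positive definite, M·D + (M·D)ᵀ = t_R·t_Rᵀ − t_L·t_Lᵀ, t_Lᵀ·𝟙 = 1, and the kernel of D equals the span of 𝟙. Let o ∈ ℝ^s be nonzero with Dᵀ·M·o = 0, F = I − o·(M·o)ᵀ/(oᵀ·M·o), and X ∈ ℝ^{s×s} with D·X = F and t_Lᵀ·X = 0. Let p ≥ 1 and let τ ∈ ℝ^s satisfy D·τ^q = q·τ^{q−1} for all 1 ≤ q ≤ p, and t_Lᵀ·τ^q = 0 and t_Rᵀ·τ^q = 1 for all 1 ≤ q ≤ p−1 (τ^q the componentwise power, τ^0 = 𝟙). Then q·(Xᵀ·M·τ^{q−1}) = M·(𝟙 − τ^q) for all 1 ≤ q ≤ p−1; that is, the Runge–Kutta coefficients of the SBP projection scheme satisfy the simplifying assumption D(p−1). -/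
open Matrix

private lemma vecMulVec_mulVec' {s : ℕ} (a b v : Fin s → ℝ) :
    (vecMulVec a b) *ᵥ v = (b ⬝ᵥ v) • a := by
  funext i
  simp only [vecMulVec_apply, mulVec, dotProduct, Pi.smul_apply, smul_eq_mul, Finset.sum_mul]
  exact Finset.sum_congr rfl fun x _ => by ring

private lemma vecMulVec_transpose' {s : ℕ} (a b : Fin s → ℝ) :
    (vecMulVec a b)ᵀ = vecMulVec b a := by
  funext i j; simp [vecMulVec_apply, mul_comm]

/-- Simplifying assumption `D(p−1)` for the SBP projection
scheme. With the SBP property, nullspace consistency, `t_Lᵀ 𝟙 = 1`, filter `F`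
and matrix representation `X` of `J F`, if `D τ^q = q τ^(q−1)` for `1 ≤ q ≤ p`
and `t_Lᵀ τ^q = 0`, `t_Rᵀ τ^q = 1` for `1 ≤ q ≤ p−1`, then
`q (Xᵀ M τ^(q−1)) = M (𝟙 − τ^q)` for all `1 ≤ q ≤ p−1`. -/
theorem sbp_projection_simplifying_D
    {s : ℕ} (hs : 1 ≤ s)
    (D M : Matrix (Fin s) (Fin s) ℝ) (tL tR : Fin s → ℝ)
    (hM : M.PosDef)
    (hSBP : M * D + (M * D)ᵀ = vecMulVec tR tR - vecMulVec tL tL)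
    (htL1 : tL ⬝ᵥ (1 : Fin s → ℝ) = 1)
    (hker : LinearMap.ker (Matrix.toLin' D) = Submodule.span ℝ {(1 : Fin s → ℝ)})
    (o : Fin s → ℝ) (ho : o ≠ 0) (hoD : Dᵀ *ᵥ (M *ᵥ o) = 0)
    (F : Matrix (Fin s) (Fin s) ℝ)
    (hF : F = 1 - (o ⬝ᵥ (M *ᵥ o))⁻¹ • vecMulVec o (M *ᵥ o))
    (X : Matrix (Fin s) (Fin s) ℝ)
    (hX : D * X = F) (hXL : tL ᵥ* X = 0)
    (p : ℕ) (hp : 1 ≤ p)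
    (τ : Fin s → ℝ)
    (hacc : ∀ q : ℕ, 1 ≤ q → q ≤ p → D *ᵥ (τ ^ q) = (q : ℝ) • (τ ^ (q - 1)))
    (hτL : ∀ q : ℕ, 1 ≤ q → q ≤ p - 1 → tL ⬝ᵥ (τ ^ q) = 0)
    (hτR : ∀ q : ℕ, 1 ≤ q → q ≤ p - 1 → tR ⬝ᵥ (τ ^ q) = 1) :
    ∀ q : ℕ, 1 ≤ q → q ≤ p - 1 →
      (q : ℝ) • (Xᵀ *ᵥ (M *ᵥ (τ ^ (q - 1)))) = M *ᵥ ((1 : Fin s → ℝ) - τ ^ q) := by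
  intro q hq1 hq2
  have hp2 : 2 ≤ p := by omega
  have hMT : Mᵀ = M := by simpa using hM.isHermitian.eq
  -- D annihilates the ones vector
  have hD1 : D *ᵥ (1 : Fin s → ℝ) = 0 := by
    have h : (1 : Fin s → ℝ) ∈ LinearMap.ker (Matrix.toLin' D) := by
      rw [hker]; exact Submodule.mem_span_singleton_self _
    simpa [Matrix.toLin'_apply] using h
  -- symmetry of M in dot products
  have hMsym : ∀ u w : Fin s → ℝ, u ⬝ᵥ (M *ᵥ w) = (M *ᵥ u) ⬝ᵥ w := by
    intro u w
    rw [dotProduct_mulVec, ← mulVec_transpose, hMT]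
  -- o is M-orthogonal to the range of D
  have hstep : ∀ v : Fin s → ℝ, o ⬝ᵥ (M *ᵥ (D *ᵥ v)) = 0 := by
    intro v
    rw [hMsym, dotProduct_mulVec, ← mulVec_transpose, hoD, zero_dotProduct]
  -- o is M-orthogonal to τ^r for r + 1 ≤ p
  have hoM : ∀ r : ℕ, r + 1 ≤ p → o ⬝ᵥ (M *ᵥ (τ ^ r)) = 0 := by
    intro r hr
    have h := hstep (τ ^ (r + 1))
    rw [hacc (r + 1) (by omega) hr, Nat.add_sub_cancel] at h
    rw [mulVec_smul, dotProduct_smul] at h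
    have hc : (((r + 1 : ℕ)) : ℝ) ≠ 0 := by exact_mod_cast Nat.succ_ne_zero r
    exact (smul_eq_zero.mp h).resolve_left hc
  -- the filter leaves M τ^r invariant (transposed form)
  have hFM : ∀ r : ℕ, r + 1 ≤ p → Fᵀ *ᵥ (M *ᵥ (τ ^ r)) = M *ᵥ (τ ^ r) := by
    intro r hr
    rw [hF, transpose_sub, transpose_one, transpose_smul, vecMulVec_transpose',
      sub_mulVec, one_mulVec, smul_mulVec, vecMulVec_mulVec', hoM r hr]
    simp
  -- the main algebraic identity from the SBP property
  have key : ∀ v : Fin s → ℝ,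
      Xᵀ *ᵥ (M *ᵥ (D *ᵥ v)) =
        (tR ⬝ᵥ v) • (Xᵀ *ᵥ tR) - Fᵀ *ᵥ (M *ᵥ v) - (tL ⬝ᵥ v) • (Xᵀ *ᵥ tL) := by
    intro v
    have hMD : M * D = vecMulVec tR tR - vecMulVec tL tL - (M * D)ᵀ := by
      rw [← hSBP, add_sub_cancel_right]
    have hXMDT : Xᵀ * (M * D)ᵀ = Fᵀ * M := by
      rw [← transpose_mul, mul_assoc, hX, transpose_mul, hMT]
    calc Xᵀ *ᵥ (M *ᵥ (D *ᵥ v)) = Xᵀ *ᵥ ((M * D) *ᵥ v) := by rw [← mulVec_mulVec]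
      _ = Xᵀ *ᵥ ((vecMulVec tR tR - vecMulVec tL tL - (M * D)ᵀ) *ᵥ v) := by rw [← hMD]
      _ = Xᵀ *ᵥ ((tR ⬝ᵥ v) • tR - (tL ⬝ᵥ v) • tL - (M * D)ᵀ *ᵥ v) := by
            rw [sub_mulVec, sub_mulVec, vecMulVec_mulVec', vecMulVec_mulVec']
      _ = (tR ⬝ᵥ v) • (Xᵀ *ᵥ tR) - (tL ⬝ᵥ v) • (Xᵀ *ᵥ tL) - Xᵀ *ᵥ ((M * D)ᵀ *ᵥ v) := by
            rw [mulVec_sub, mulVec_sub, mulVec_smul, mulVec_smul]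
      _ = (tR ⬝ᵥ v) • (Xᵀ *ᵥ tR) - Fᵀ *ᵥ (M *ᵥ v) - (tL ⬝ᵥ v) • (Xᵀ *ᵥ tL) := by
            rw [mulVec_mulVec, hXMDT, ← mulVec_mulVec]; ring
  have hXtL : Xᵀ *ᵥ tL = 0 := by rw [mulVec_transpose, hXL]
  -- τ^0 = 1
  have hτ0 : τ ^ (0 : ℕ) = (1 : Fin s → ℝ) := pow_zero τ
  -- tR ⬝ᵥ 1 = 1
  have hone : (0:ℝ) < (1 : Fin s → ℝ) ⬝ᵥ (M *ᵥ (1 : Fin s → ℝ)) := by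
    have h1 : (1 : Fin s → ℝ) ≠ 0 := by
      intro h
      have := congrFun h ⟨0, hs⟩
      simp at this
    simpa using hM.dotProduct_mulVec_pos h1
  have hquad : ∀ u v : Fin s → ℝ, u ⬝ᵥ ((M * D) *ᵥ v) + ((M * D) *ᵥ u) ⬝ᵥ v
      = (tR ⬝ᵥ u) * (tR ⬝ᵥ v) - (tL ⬝ᵥ u) * (tL ⬝ᵥ v) := by
    intro u v
    have h := congrArg (fun A => u ⬝ᵥ (A *ᵥ v)) hSBP
    simp only [add_mulVec, sub_mulVec, dotProduct_add, dotProduct_sub,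
      vecMulVec_mulVec', dotProduct_smul, smul_eq_mul] at h
    rw [show u ⬝ᵥ ((M * D)ᵀ *ᵥ v) = ((M * D) *ᵥ u) ⬝ᵥ v by
      rw [dotProduct_mulVec, ← mulVec_transpose, transpose_transpose]] at h
    rw [h, dotProduct_comm u tR, dotProduct_comm u tL]; ring
  have hMD1 : (M * D) *ᵥ (1 : Fin s → ℝ) = 0 := by
    rw [← mulVec_mulVec, hD1, mulVec_zero]
  have htRsq : (tR ⬝ᵥ (1 : Fin s → ℝ)) ^ 2 = 1 := by
    have h := hquad (1 : Fin s → ℝ) (1 : Fin s → ℝ)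
    rw [hMD1] at h
    simp only [dotProduct_zero, zero_dotProduct, add_zero, htL1] at h
    nlinarith
  have hτ1 : τ ^ (1 : ℕ) = τ := pow_one τ
  have htRpos : tR ⬝ᵥ (1 : Fin s → ℝ) = (1 : Fin s → ℝ) ⬝ᵥ (M *ᵥ (1 : Fin s → ℝ)) := by
    have h := hquad (1 : Fin s → ℝ) τ
    have hDτ : (M * D) *ᵥ τ = M *ᵥ (1 : Fin s → ℝ) := by
      rw [← mulVec_mulVec, ← hτ1, hacc 1 le_rfl (by omega)]
      simp [hτ0]
    rw [hDτ, hMD1] at h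
    have hL := hτL 1 le_rfl (by omega)
    have hR := hτR 1 le_rfl (by omega)
    rw [hτ1] at hL hR
    simp only [zero_dotProduct, add_zero, htL1, hL, hR, mul_one, mul_zero, sub_zero] at h
    linarith
  have htR1 : tR ⬝ᵥ (1 : Fin s → ℝ) = 1 := by
    have := htRsq
    rw [htRpos] at this ⊢
    nlinarith
  -- Xᵀ tR = M 1
  have hXtR : Xᵀ *ᵥ tR = M *ᵥ (1 : Fin s → ℝ) := by
    have hF1 : Fᵀ *ᵥ (M *ᵥ (1 : Fin s → ℝ)) = M *ᵥ (1 : Fin s → ℝ) := by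
      have := hFM 0 (by omega)
      rwa [hτ0] at this
    have h := key (1 : Fin s → ℝ)
    rw [hD1, mulVec_zero, mulVec_zero, htR1, htL1, one_smul, one_smul, hXtL, hF1,
      sub_zero] at h
    have h2 := h.symm
    rwa [sub_eq_zero] at h2
  -- main computation
  have h := key (τ ^ q)
  rw [hacc q hq1 (by omega), mulVec_smul, mulVec_smul] at h
  rw [hτR q hq1 hq2, one_smul, hXtL, smul_zero, sub_zero, hXtR,
    hFM q (by omega)] at h
  rw [h, mulVec_sub]
end

section
/- Let D, M ∈ ℝ^{s×s} and t_L, t_R ∈ ℝ^s, where M is symmetric positive definite, M·D + (M·D)ᵀ = t_R·t_Rᵀ − t_L·t_Lᵀ, t_Rᵀ·𝟙 = 1, and the kernel of D equals the span of 𝟙. Let o ∈ ℝ^s be nonzero with Dᵀ·M·o = 0, F = I − o·(M·o)ᵀ/(oᵀ·M·o), and let X̃ ∈ ℝ^{s×s} satisfy D·X̃ = −F and t_Rᵀ·X̃ = 0 (the matrix representation of the backward integral operator J̃·F, where J̃ inverts −D on grid functions vanishing at the right endpoint). Let p ≥ 1 and let τ ∈ ℝ^s satisfy D·τ^q = q·τ^{q−1}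 for all 1 ≤ q ≤ p and t_Lᵀ·τ^q = 0 for all 1 ≤ q ≤ p−1 (τ^q the componentwise power, τ^0 = 𝟙). Then q·(X̃ᵀ·M·τ^{q−1}) = M·τ^q for all 1 ≤ q ≤ p−1; that is, the Runge–Kutta coefficients A = M⁻¹·(J̃·F)ᵀ·M of the adjoint (Lobatto IIIB-type) SBP scheme satisfy the simplifying assumption C(p−1). -/
open Matrix

lemma vecMulVec_mulVec_aux {s : ℕ} (a b v : Fin s → ℝ) :
    vecMulVec a b *ᵥ v = (b ⬝ᵥ v) • a := by
  ext i
  simp only [vecMulVec, mulVec, dotProduct, Pi.smul_apply, smul_eq_mul, of_apply]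
  rw [Finset.sum_mul]
  exact Finset.sum_congr rfl fun j _ => by ring

/-- Simplifying assumption `C(p−1)` for the adjoint
(Lobatto IIIB-type) SBP scheme. With the SBP property, nullspace consistency,
`t_Rᵀ 𝟙 = 1`, filter `F`, and matrix representation `X̃` of the backward
integral operator `J̃ F` (`D X̃ = −F`, `t_Rᵀ X̃ = 0`), if `D τ^q = q τ^(q−1)`
for `1 ≤ q ≤ p` and `t_Lᵀ τ^q = 0` for `1 ≤ q ≤ p−1`, then
`q (X̃ᵀ M τ^(q−1)) = M τ^q` for all `1 ≤ q ≤ p−1`. -/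
theorem sbp_adjoint_projection_simplifying_C
    {s : ℕ} (hs : 1 ≤ s)
    (D M : Matrix (Fin s) (Fin s) ℝ) (tL tR : Fin s → ℝ)
    (hM : M.PosDef)
    (hSBP : M * D + (M * D)ᵀ = vecMulVec tR tR - vecMulVec tL tL)
    (htR1 : tR ⬝ᵥ (1 : Fin s → ℝ) = 1)
    (hker : LinearMap.ker (Matrix.toLin' D) = Submodule.span ℝ {(1 : Fin s → ℝ)})
    (o : Fin s → ℝ) (ho : o ≠ 0) (hoD : Dᵀ *ᵥ (M *ᵥ o) = 0)
    (F : Matrix (Fin s) (Fin s) ℝ)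
    (hF : F = 1 - (o ⬝ᵥ (M *ᵥ o))⁻¹ • vecMulVec o (M *ᵥ o))
    (X' : Matrix (Fin s) (Fin s) ℝ)
    (hX' : D * X' = -F) (hXR : tR ᵥ* X' = 0)
    (p : ℕ) (hp : 1 ≤ p)
    (τ : Fin s → ℝ)
    (hacc : ∀ q : ℕ, 1 ≤ q → q ≤ p → D *ᵥ (τ ^ q) = (q : ℝ) • (τ ^ (q - 1)))
    (hτL : ∀ q : ℕ, 1 ≤ q → q ≤ p - 1 → tL ⬝ᵥ (τ ^ q) = 0) :
    ∀ q : ℕ, 1 ≤ q → q ≤ p - 1 →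
      (q : ℝ) • (X'ᵀ *ᵥ (M *ᵥ (τ ^ (q - 1)))) = M *ᵥ (τ ^ q) := by
  have hMsym : Mᵀ = M := hM.1.eq
  intro q hq1 hq2
  set w := τ ^ q with hw
  -- key fact: (M o) ⬝ τ^q = 0
  have hqp : q + 1 ≤ p := by omega
  have hMoτ : (M *ᵥ o) ⬝ᵥ w = 0 := by
    have h1 := hacc (q + 1) (by omega) hqp
    simp only [Nat.add_sub_cancel] at h1
    have h2 : (M *ᵥ o) ⬝ᵥ (D *ᵥ τ ^ (q + 1)) = ((q : ℝ) + 1) * ((M *ᵥ o) ⬝ᵥ w) := by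
      rw [h1]; push_cast; simp [dotProduct_smul, hw]
    have h3 : (M *ᵥ o) ⬝ᵥ (D *ᵥ τ ^ (q + 1)) = 0 := by
      rw [dotProduct_mulVec, ← mulVec_transpose, hoD, zero_dotProduct]
    have hne : ((q : ℝ) + 1) ≠ 0 := by positivity
    have := h3.symm.trans h2
    exact (mul_eq_zero.mp this.symm).resolve_left hne
  -- key fact: o ⬝ (M w) = 0
  have hoMw : o ⬝ᵥ (M *ᵥ w) = 0 := by
    rw [dotProduct_mulVec, ← mulVec_transpose, hMsym]
    exact hMoτ
  -- X'ᵀ tR = 0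
  have hXtR : X'ᵀ *ᵥ tR = 0 := by rw [mulVec_transpose, hXR]
  -- tL ⬝ w = 0
  have htLw : tL ⬝ᵥ w = 0 := hτL q hq1 hq2
  -- D w = q • τ^(q-1)
  have hDw : D *ᵥ w = (q : ℝ) • (τ ^ (q - 1)) := hacc q hq1 (by omega)
  calc (q : ℝ) • (X'ᵀ *ᵥ (M *ᵥ (τ ^ (q - 1))))
      = X'ᵀ *ᵥ (M *ᵥ ((q : ℝ) • (τ ^ (q - 1)))) := by
        rw [mulVec_smul, mulVec_smul]
    _ = X'ᵀ *ᵥ ((M * D) *ᵥ w) := by rw [← hDw, ← mulVec_mulVec]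
    _ = M *ᵥ w := by
        have hMD : M * D = vecMulVec tR tR - vecMulVec tL tL - (M * D)ᵀ := by
          rw [← hSBP, add_sub_cancel_right]
        rw [hMD]
        rw [sub_mulVec, sub_mulVec, mulVec_sub]
        rw [vecMulVec_mulVec_aux, vecMulVec_mulVec_aux, htLw, zero_smul, sub_zero]
        rw [mulVec_smul, hXtR, smul_zero, zero_sub]
        have : X'ᵀ *ᵥ ((M * D)ᵀ *ᵥ w) = (D * X')ᵀ *ᵥ (M *ᵥ w) := by
          rw [transpose_mul, ← mulVec_mulVec, hMsym, transpose_mul, ← mulVec_mulVec]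
        rw [this, hX', transpose_neg, neg_mulVec, hF]
        rw [transpose_sub, transpose_one, transpose_smul]
        have hvt : (vecMulVec o (M *ᵥ o))ᵀ = vecMulVec (M *ᵥ o) o := by
          ext i j; simp [vecMulVec, mul_comm]
        rw [hvt, sub_mulVec, one_mulVec, smul_mulVec, vecMulVec_mulVec_aux, hoMw,
          zero_smul, smul_zero, sub_zero, neg_neg]
end
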